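/- arXiv:1109.2848 — 2 statements merged into one kernel-verified Lean document; each statement's English description precedes it below -/
import Mathlib

section
/- Let N : ℕ, f : ℝ → ℂ any function, and ρ : Fin N → ℂ with ρ ≠ 0. Then the image of the projection map is null: B(P_f(ρ), P_f(ρ)) = 0. (Toy-model form of Proposition 1, item (proj-prop1): the projection maps every vector onto the quadric B(λ,λ) = 0.) -/
noncomputable section

open scoped BigOperators

namespace PureSpinorToy

variable {N : ℕ}

/-- Complex bilinear pairing `B(ρ,σ) = ∑ I, ρ_I σ_I`. -/
def B (ρ σ : Fin N → ℂ) : ℂ := ∑ I, ρ I * σ I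

/-- Hermitian inner product `⟪ρ,σ⟫ = ∑ I, conj(ρ_I) σ_I`. -/
def hInner (ρ σ : Fin N → ℂ) : ℂ := ∑ I, (starRingEnd ℂ) (ρ I) * σ I

/-- Norm square `‖ρ‖² = ⟪ρ,ρ⟫` (a nonnegative real). -/
def nsq (ρ : Fin N → ℂ) : ℝ := (hInner ρ ρ).re

/-- Componentwise complex conjugation `ρ̄`. -/
def conjFun (ρ : Fin N → ℂ) : Fin N → ℂ := fun I => (starRingEnd ℂ) (ρ I)

/-- `ζ(ρ) = B(ρ,ρ)/‖ρ‖²`. -/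
def zeta (ρ : Fin N → ℂ) : ℂ := B ρ ρ / (nsq ρ : ℂ)

/-- `ξ(ρ) = |ζ(ρ)|²`. -/
def xi (ρ : Fin N → ℂ) : ℝ := Complex.normSq (zeta ρ)

/-- The family of projection maps
`P_f(ρ) = f(ξ(ρ)) • (ρ − (ζ(ρ)/(1+√(1−ξ(ρ)))) • ρ̄)`. -/
def P (f : ℝ → ℂ) (ρ : Fin N → ℂ) : Fin N → ℂ :=
  f (xi ρ) • (ρ - (zeta ρ / (1 + (Real.sqrt (1 - xi ρ) : ℂ))) • conjFun ρ)

/-- The special function `h(t) = (1+√(1−t))/(2√(1−t))`. -/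
def h (t : ℝ) : ℂ := (((1 + Real.sqrt (1 - t)) / (2 * Real.sqrt (1 - t)) : ℝ) : ℂ)

/-- The potential `Φ(ρ) = (‖ρ‖²/2)(1+√(1−ξ(ρ)))`. -/
def Phi (ρ : Fin N → ℂ) : ℝ := (nsq ρ / 2) * (1 + Real.sqrt (1 - xi ρ))

lemma nsq_eq_sum (ρ : Fin N → ℂ) : nsq ρ = ∑ I, Complex.normSq (ρ I) := by
  simp [nsq, hInner, Complex.normSq_eq_conj_mul_self]
  simp [Complex.normSq_apply]

lemma nsq_pos {ρ : Fin N → ℂ} (hρ : ρ ≠ 0) : 0 < nsq ρ := by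
  rw [nsq_eq_sum]
  rcases Function.ne_iff.mp hρ with ⟨I, hI⟩
  exact Finset.sum_pos' (fun i _ => Complex.normSq_nonneg _)
    ⟨I, Finset.mem_univ I, Complex.normSq_pos.mpr hI⟩

lemma B_conj_right (ρ : Fin N → ℂ) : B ρ (conjFun ρ) = ((nsq ρ : ℝ) : ℂ) := by
  rw [nsq_eq_sum]
  push_cast
  simp [B, conjFun, Complex.mul_conj]

lemma B_conj_conj (ρ : Fin N → ℂ) :
    B (conjFun ρ) (conjFun ρ) = (starRingEnd ℂ) (B ρ ρ) := by
  simp [B, conjFun, map_sum]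

lemma abs_B_le (ρ : Fin N → ℂ) : ‖B ρ ρ‖ ≤ nsq ρ := by
  rw [nsq_eq_sum, B]
  refine le_trans (norm_sum_le _ _) (le_of_eq ?_)
  refine Finset.sum_congr rfl fun I _ => ?_
  rw [norm_mul, Complex.normSq_eq_norm_sq]; ring

lemma xi_le_one {ρ : Fin N → ℂ} (hρ : ρ ≠ 0) : xi ρ ≤ 1 := by
  have hn := nsq_pos hρ
  have h1 : ‖zeta ρ‖ ≤ 1 := by
    rw [zeta, norm_div, Complex.norm_real, Real.norm_of_nonneg hn.le,
      div_le_one hn]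
    exact abs_B_le ρ
  calc xi ρ = ‖zeta ρ‖ ^ 2 := by
        rw [xi, Complex.sq_norm]
    _ ≤ 1 := by nlinarith [norm_nonneg (zeta ρ)]

lemma B_expand (a c : ℂ) (x y : Fin N → ℂ) :
    B (a • (x - c • y)) (a • (x - c • y)) =
      a ^ 2 * B x x - 2 * a ^ 2 * c * B x y + a ^ 2 * c ^ 2 * B y y := by
  simp only [B, Pi.smul_apply, Pi.sub_apply, smul_eq_mul, Finset.mul_sum]
  rw [← Finset.sum_sub_distrib, ← Finset.sum_add_distrib]
  exact Finset.sum_congr rfl fun I _ => by ring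

/-- Toy model, Proposition 1 (proj-prop1): the image of the projection map is null. -/
theorem statement2 {N : ℕ} (f : ℝ → ℂ) (ρ : Fin N → ℂ) (hρ : ρ ≠ 0) :
    B (P f ρ) (P f ρ) = 0 := by
  have hn := nsq_pos hρ
  have hn' : ((nsq ρ : ℝ) : ℂ) ≠ 0 := by exact_mod_cast hn.ne'
  set s : ℝ := Real.sqrt (1 - xi ρ) with hs
  have hs0 : 0 ≤ s := Real.sqrt_nonneg _
  have hs2 : (s : ℂ) ^ 2 = 1 - (xi ρ : ℂ) := by
    have : s ^ 2 = 1 - xi ρ := Real.sq_sqrt (by linarith [xi_le_one hρ])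
    have h2 := congrArg (Complex.ofReal) this
    push_cast at h2
    exact h2
  have h1s : (1 : ℂ) + (s : ℂ) ≠ 0 := by
    intro h
    have : (1 : ℝ) + s = 0 := by exact_mod_cast h
    linarith
  have hBρρ : B ρ ρ = zeta ρ * ((nsq ρ : ℝ) : ℂ) := by
    rw [zeta, div_mul_cancel₀ _ hn']
  have hζζ : zeta ρ * (starRingEnd ℂ) (zeta ρ) = ((xi ρ : ℝ) : ℂ) := by
    rw [xi, Complex.mul_conj]
  rw [P, B_expand, hBρρ, B_conj_right, B_conj_conj, hBρρ, map_mul,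
    Complex.conj_ofReal, ← hs]
  field_simp
  linear_combination (f (xi ρ) ^ 2 * ((nsq ρ : ℝ) : ℂ) * zeta ρ) * hs2 +
    (f (xi ρ) ^ 2 * ((nsq ρ : ℝ) : ℂ) * zeta ρ) * hζζ

end PureSpinorToy
end
end

section
/- Let N : ℕ, f : ℝ → ℂ, and ρ : Fin N → ℂ with ρ ≠ 0. Then the modulus square of the projected vector is ‖P_f(ρ)‖² = 2·‖ρ‖²·|f(ξ(ρ))|²·(1 − ξ(ρ))/(1 + √(1 − ξ(ρ))). (Toy-model form of Proposition 1, item (Proj-modulus).) -/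
noncomputable section

open scoped BigOperators

namespace PureSpinorToy

variable {N : ℕ}

lemma nsq_eq (σ : Fin N → ℂ) : nsq σ = ∑ I, Complex.normSq (σ I) := by
  unfold nsq hInner
  rw [Complex.re_sum]
  refine Finset.sum_congr rfl fun I _ => ?_
  simp [Complex.mul_re, Complex.normSq_apply]

/-- Toy model, Proposition 1 (Proj-modulus): the modulus square of the projected vector. -/
theorem statement5 {N : ℕ} (f : ℝ → ℂ) (ρ : Fin N → ℂ) (hρ : ρ ≠ 0) :
    nsq (P f ρ)
      = 2 * nsq ρ * Complex.normSq (f (xi ρ)) * ((1 - xi ρ) / (1 + Real.sqrt (1 - xi ρ))) := by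
  have hn0 : 0 < nsq ρ := by
    rw [nsq_eq]
    obtain ⟨I, hI⟩ : ∃ I, ρ I ≠ 0 := by
      by_contra h; push_neg at h; exact hρ (funext h)
    exact Finset.sum_pos' (fun i _ => Complex.normSq_nonneg _)
      ⟨I, Finset.mem_univ I, Complex.normSq_pos.mpr hI⟩
  have hnC : ((nsq ρ : ℂ)) ≠ 0 := by exact_mod_cast hn0.ne'
  have hB : B ρ ρ = zeta ρ * (nsq ρ : ℂ) := by
    unfold zeta
    exact (div_mul_cancel₀ _ hnC).symm
  have habsB : ‖B ρ ρ‖ ≤ nsq ρ := by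
    rw [nsq_eq]
    unfold B
    calc ‖∑ I, ρ I * ρ I‖ ≤ ∑ I, ‖ρ I * ρ I‖ := by
          simpa using norm_sum_le Finset.univ (fun I => ρ I * ρ I)
      _ = ∑ I, Complex.normSq (ρ I) := by
          refine Finset.sum_congr rfl fun I _ => ?_
          rw [norm_mul, ← Complex.sq_norm]; ring
  have hxi1 : xi ρ ≤ 1 := by
    have : Complex.normSq (B ρ ρ) ≤ (nsq ρ) ^ 2 := by
      rw [← Complex.sq_norm]
      exact pow_le_pow_left₀ (norm_nonneg _) habsB 2
    unfold xi zeta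
    rw [Complex.normSq_div, Complex.normSq_ofReal]
    rw [div_le_one (by positivity)]
    calc Complex.normSq (B ρ ρ) ≤ (nsq ρ)^2 := this
      _ = nsq ρ * nsq ρ := sq (nsq ρ) ▸ by ring
  set s := Real.sqrt (1 - xi ρ) with hsdef
  have hs0 : 0 ≤ s := Real.sqrt_nonneg _
  have hs2 : s ^ 2 = 1 - xi ρ := Real.sq_sqrt (by linarith)
  have h1s : (0:ℝ) < 1 + s := by linarith
  have h1sC : ((1:ℂ) + (s:ℂ)) ≠ 0 := by
    have heq : ((1:ℂ) + (s:ℂ)) = (((1+s : ℝ)):ℂ) := by push_cast; ring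
    rw [heq]; exact_mod_cast h1s.ne'
  set c : ℂ := zeta ρ / (1 + (s:ℂ)) with hcdef
  -- normSq c
  have hnsqc : Complex.normSq c = xi ρ / (1 + s)^2 := by
    rw [hcdef, Complex.normSq_div]
    congr 1
    have : ((1:ℂ) + (s:ℂ)) = (((1+s : ℝ)):ℂ) := by push_cast; ring
    rw [this, Complex.normSq_ofReal]; ring
  -- the cross term
  have hcross : ∑ I, (ρ I * (starRingEnd ℂ) (c * (starRingEnd ℂ) (ρ I))).re
      = xi ρ * nsq ρ / (1 + s) := by
    have h1 : ∀ I, ρ I * (starRingEnd ℂ) (c * (starRingEnd ℂ) (ρ I))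
        = (starRingEnd ℂ) c * (ρ I * ρ I) := by
      intro I; simp [map_mul]; ring
    have h2 : ∑ I, (ρ I * (starRingEnd ℂ) (c * (starRingEnd ℂ) (ρ I))).re
        = ((starRingEnd ℂ) c * B ρ ρ).re := by
      rw [← Complex.re_sum]
      congr 1
      rw [show ((starRingEnd ℂ) c * B ρ ρ) = ∑ I, (starRingEnd ℂ) c * (ρ I * ρ I) by
        unfold B; rw [Finset.mul_sum]]
      exact Finset.sum_congr rfl fun I _ => h1 I
    rw [h2, hB, hcdef]
    have : (starRingEnd ℂ) (zeta ρ / (1 + (s:ℂ))) * (zeta ρ * (nsq ρ : ℂ))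
        = ((xi ρ * nsq ρ / (1 + s) : ℝ) : ℂ) := by
      rw [map_div₀]
      have hc1 : (starRingEnd ℂ) ((1:ℂ) + (s:ℂ)) = (1 + (s:ℂ)) := by
        simp [map_add, Complex.conj_ofReal]
      rw [hc1]
      rw [div_mul_eq_mul_div, ← mul_assoc]
      rw [show (starRingEnd ℂ) (zeta ρ) * zeta ρ = ((xi ρ : ℝ):ℂ) by
        rw [Complex.conj_mul']
        unfold xi
        rw [Complex.normSq_eq_norm_sq]
        push_cast; ring]
      push_cast
      field_simp
    rw [this, Complex.ofReal_re]
  -- main expansion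
  have hmain : nsq (P f ρ) = Complex.normSq (f (xi ρ)) *
      (nsq ρ + xi ρ / (1 + s)^2 * nsq ρ - 2 * (xi ρ * nsq ρ / (1 + s))) := by
    rw [nsq_eq]
    unfold P conjFun
    rw [← hsdef, ← hcdef]
    have : ∀ I, Complex.normSq ((f (xi ρ) • (ρ - c • fun I => (starRingEnd ℂ) (ρ I))) I)
        = Complex.normSq (f (xi ρ)) *
          (Complex.normSq (ρ I) + Complex.normSq c * Complex.normSq (ρ I)
            - 2 * (ρ I * (starRingEnd ℂ) (c * (starRingEnd ℂ) (ρ I))).re) := by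
      intro I
      simp only [Pi.smul_apply, Pi.sub_apply, smul_eq_mul, Complex.normSq_mul]
      rw [Complex.normSq_sub]
      rw [Complex.normSq_mul, Complex.normSq_conj]
    rw [Finset.sum_congr rfl fun I _ => this I]
    rw [← Finset.mul_sum]
    congr 1
    rw [Finset.sum_sub_distrib, Finset.sum_add_distrib, ← Finset.mul_sum, ← Finset.mul_sum,
      ← nsq_eq, hcross, hnsqc]
  rw [hmain]
  have hxi : xi ρ = 1 - s ^ 2 := by linarith
  rw [hxi]
  field_simp
  ring
end PureSpinorToy
end
end
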